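/- For any integer vector r = (r₁, ..., r_p) of positive integers with |r| even, the number of semi-standard Young tableaux of rectangular shape (|r|/2, |r|/2) (2 rows, |r|/2 columns) and weight r (containing rᵢ entries equal to i, rows non-decreasing, columns strictly increasing) equals #NC₂(r), the number of non-crossing pairings of {1,...,|r|} pairing no two elements within the same block of 1̂_r. -/

import Mathlib

open Finset
namespace NC2


/-- count of Fin M elements in [l, u) -/
lemma card_filter_ico {M : ℕ} (l u : ℕ) (hu : u ≤ M) :
    (Finset.univ.filter (fun x : Fin M => l ≤ (x : ℕ) ∧ (x : ℕ) < u)).card = u - l := by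
  rw [← Nat.card_Ico l u]
  apply Finset.card_bij (fun (x : Fin M) _ => (x : ℕ))
  · intro a ha; simp only [mem_filter] at ha; simp [Finset.mem_Ico]; omega
  · intro a _ b _ h; exact Fin.val_injective h
  · intro b hb; simp only [Finset.mem_Ico] at hb
    exact ⟨⟨b, by omega⟩, by simp; omega, rfl⟩

lemma card_filter_lt_fin {M : ℕ} (u : ℕ) (hu : u ≤ M) :
    (Finset.univ.filter (fun x : Fin M => (x : ℕ) < u)).card = u := by
  have := card_filter_ico (M := M) 0 u hu
  simpa using this

/-- a monotone function `Fin n → Fin p` is determined by its fiber cardinalities -/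
lemma monotone_eq_of_fiber_card {n p : ℕ} (g h : Fin n → Fin p)
    (hg : Monotone g) (hh : Monotone h)
    (hc : ∀ k, (univ.filter fun c => g c = k).card = (univ.filter fun c => h c = k).card) :
    g = h := by
  have key : ∀ (g : Fin n → Fin p), Monotone g → ∀ (c : Fin n) (k : Fin p),
      (g c ≤ k ↔ (c : ℕ) < (univ.filter fun c' => g c' ≤ k).card) := by
    intro g hg c k
    constructor
    · intro hck
      have hsub : (univ.filter fun c' : Fin n => (c' : ℕ) < (c : ℕ) + 1)
          ⊆ (univ.filter fun c' => g c' ≤ k) := by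
        intro y hy
        simp only [mem_filter, mem_univ, true_and] at hy ⊢
        exact le_trans (hg (by omega : y ≤ c)) hck
      have := Finset.card_le_card hsub
      rw [card_filter_lt_fin ((c:ℕ)+1) (by omega)] at this
      omega
    · intro hcard
      by_contra hgt
      push_neg at hgt
      have hsub : (univ.filter fun c' => g c' ≤ k)
          ⊆ (univ.filter fun c' : Fin n => (c' : ℕ) < (c : ℕ)) := by
        intro y hy
        simp only [mem_filter, mem_univ, true_and] at hy ⊢
        by_contra hyc
        push_neg at hyc
        exact absurd (le_trans (hg (by omega : c ≤ y)) hy) (not_le.mpr hgt)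
      have := Finset.card_le_card hsub
      rw [card_filter_lt_fin (c:ℕ) (by omega)] at this
      omega
  have hle : ∀ (g h : Fin n → Fin p), Monotone g → Monotone h →
      (∀ k, (univ.filter fun c => g c = k).card = (univ.filter fun c => h c = k).card) →
      ∀ c, g c ≤ h c := by
    intro g h hg hh hc c
    have hcnt : ∀ k, (univ.filter fun c' => g c' ≤ k).card
        = (univ.filter fun c' => h c' ≤ k).card := by
      intro k
      have e1 : (univ.filter fun c' => g c' ≤ k).card
          = ∑ j ∈ univ.filter (· ≤ k), (univ.filter fun c' => g c' = j).card := by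
        rw [Finset.card_eq_sum_card_fiberwise (f := g) (t := univ.filter (· ≤ k))]
        · apply Finset.sum_congr rfl
          intro j hj
          congr 1
          ext c'
          simp only [mem_filter, mem_univ, true_and] at hj ⊢
          constructor
          · rintro ⟨_, h2⟩; exact h2
          · intro h2; exact ⟨h2 ▸ hj, h2⟩
        · intro x hx
          simp only [Finset.mem_coe, mem_filter, mem_univ, true_and] at hx ⊢
          exact hx
      have e2 : (univ.filter fun c' => h c' ≤ k).card
          = ∑ j ∈ univ.filter (· ≤ k), (univ.filter fun c' => h c' = j).card := by
        rw [Finset.card_eq_sum_card_fiberwise (f := h) (t := univ.filter (· ≤ k))]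
        · apply Finset.sum_congr rfl
          intro j hj
          congr 1
          ext c'
          simp only [mem_filter, mem_univ, true_and] at hj ⊢
          constructor
          · rintro ⟨_, h2⟩; exact h2
          · intro h2; exact ⟨h2 ▸ hj, h2⟩
        · intro x hx
          simp only [Finset.mem_coe, mem_filter, mem_univ, true_and] at hx ⊢
          exact hx
      rw [e1, e2]
      exact Finset.sum_congr rfl (fun j _ => hc j)
    have h1 := (key g hg c (h c)).2
    have h2 := (key h hh c (h c)).1 le_rfl
    rw [← hcnt (h c)] at h2
    exact h1 h2
  funext c
  exact le_antisymm (hle g h hg hh hc c) (hle h g hh hg (fun k => (hc k).symm) c)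



/-- discrete IVT for ±1 walks, increasing version -/
lemma walk_ivt (g : ℕ → ℤ) (hg : ∀ n, g (n+1) = g n + 1 ∨ g (n+1) = g n - 1)
    (a b : ℕ) (hab : a ≤ b) (v : ℤ) (h1 : g a ≤ v) (h2 : v ≤ g b) :
    ∃ n, a ≤ n ∧ n ≤ b ∧ g n = v := by
  induction b, hab using Nat.le_induction with
  | base => exact ⟨a, le_rfl, le_rfl, le_antisymm h1 h2⟩
  | succ b hab ih =>
    by_cases hvb : v ≤ g b
    · obtain ⟨n, h3, h4, h5⟩ := ih hvb
      exact ⟨n, h3, by omega, h5⟩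
    · push_neg at hvb
      rcases hg b with h | h
      · exact ⟨b + 1, by omega, le_rfl, by omega⟩
      · omega

/-- decreasing version -/
lemma walk_ivt' (g : ℕ → ℤ) (hg : ∀ n, g (n+1) = g n + 1 ∨ g (n+1) = g n - 1)
    (a b : ℕ) (hab : a ≤ b) (v : ℤ) (h1 : v ≤ g a) (h2 : g b ≤ v) :
    ∃ n, a ≤ n ∧ n ≤ b ∧ g n = v := by
  obtain ⟨n, h3, h4, h5⟩ := walk_ivt (fun n => -g n)
    (fun n => by rcases hg n with h | h <;> simp [h] <;> omega) a b hab (-v)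
    (by simpa using h1) (by simpa using h2)
  simp only [neg_inj] at h5
  exact ⟨n, h3, h4, h5⟩

variable {M : ℕ}

/-- extension of a word on `Fin M` to `ℕ` -/
def wext (w : Fin M → Bool) (n : ℕ) : Bool :=
  if h : n < M then w ⟨n, h⟩ else true

/-- height function of a word -/
def ht (w : Fin M → Bool) : ℕ → ℤ
  | 0 => 0
  | n + 1 => ht w n + if wext w n then 1 else -1

lemma ht_step (w : Fin M → Bool) (n : ℕ) :
    ht w (n+1) = ht w n + 1 ∨ ht w (n+1) = ht w n - 1 := by
  by_cases h : wext w n = true <;> simp [ht, h, sub_eq_add_neg]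

lemma ht_succ_true (w : Fin M → Bool) {n : ℕ} (h : wext w n = true) :
    ht w (n+1) = ht w n + 1 := by simp [ht, h]

lemma ht_succ_false (w : Fin M → Bool) {n : ℕ} (h : wext w n = false) :
    ht w (n+1) = ht w n - 1 := by simp [ht, h, sub_eq_add_neg]

lemma wext_coe {M : ℕ} (w : Fin M → Bool) (u : Fin M) : wext w (u : ℕ) = w u := by
  simp [wext]

/-- height difference is a difference of interval counts -/
lemma ht_sub (w : Fin M → Bool) (a b : ℕ) (hab : a ≤ b) :
    ht w b - ht w a =
      (((Finset.Ico a b).filter fun t => wext w t = true).card : ℤ)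
        - ((Finset.Ico a b).filter fun t => wext w t = false).card := by
  induction b, hab using Nat.le_induction with
  | base => simp
  | succ b hab ih =>
    have hb : b ∉ Finset.Ico a b := by simp
    have hins : Finset.Ico a (b+1) = insert b (Finset.Ico a b) := by
      ext x; simp [Finset.mem_insert, Finset.mem_Ico]; omega
    rw [hins, Finset.filter_insert, Finset.filter_insert]
    by_cases hw : wext w b = true
    · rw [if_pos hw, if_neg (by simp [hw]),
        Finset.card_insert_of_notMem (by simp [hb]), ht_succ_true w hw]
      push_cast at ih ⊢; omega
    · have hw' : wext w b = false := by simpa using hw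
      rw [if_neg (by simp [hw']), if_pos hw',
        Finset.card_insert_of_notMem (by simp [hb]), ht_succ_false w hw']
      push_cast at ih ⊢; omega


noncomputable def mu (w : Fin M → Bool) (x : ℕ) : ℕ :=
  sInf {y | x < y ∧ ht w (y+1) = ht w x}

def nu (w : Fin M → Bool) (y : ℕ) : ℕ :=
  Nat.findGreatest (fun x => ht w x = ht w (y+1)) (y-1)

/-- uniqueness characterization of `mu` -/
lemma mu_unique (w : Fin M → Bool) {x y : ℕ} (hxy : x < y)
    (hy : ht w (y+1) = ht w x) (hexc : ∀ t, x < t → t ≤ y → ht w x < ht w t) :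
    mu w x = y := by
  have hmem : y ∈ {y | x < y ∧ ht w (y+1) = ht w x} := ⟨hxy, hy⟩
  have hle : mu w x ≤ y := Nat.sInf_le hmem
  rcases eq_or_lt_of_le hle with h | h
  · exact h
  · exfalso
    have hmem' : x < mu w x ∧ ht w (mu w x + 1) = ht w x :=
      Nat.sInf_mem (⟨y, hmem⟩ : Set.Nonempty _)
    obtain ⟨h1, h2⟩ := hmem'
    have := hexc (mu w x + 1) (by omega) (by omega)
    omega

section Spec
variable (w : Fin M → Bool) (hbal : ∀ n, n ≤ M → 0 ≤ ht w n) (htot : ht w M = 0)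

include hbal htot in
lemma mu_spec {x : ℕ} (hx : x < M) (hwx : wext w x = true) :
    x < mu w x ∧ mu w x < M ∧ ht w (mu w x + 1) = ht w x ∧
      wext w (mu w x) = false ∧ (∀ t, x < t → t ≤ mu w x → ht w x < ht w t) := by
  have h0 : ht w (x+1) = ht w x + 1 := ht_succ_true w hwx
  -- nonemptiness
  obtain ⟨n, hn1, hn2, hn3⟩ := walk_ivt' (ht w) (ht_step w) (x+1) M (by omega)
    (ht w x) (by omega) (by rw [htot]; exact hbal x (le_of_lt hx))
  have hnx : n ≠ x + 1 := by intro h; rw [h] at hn3; omega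
  have hmemy : (n-1) ∈ {y | x < y ∧ ht w (y+1) = ht w x} := by
    constructor
    · show x < n - 1; omega
    · show ht w (n-1+1) = ht w x
      have : n - 1 + 1 = n := by omega
      rw [this, hn3]
  have hne : Set.Nonempty {y | x < y ∧ ht w (y+1) = ht w x} := ⟨n-1, hmemy⟩
  have hmem : x < mu w x ∧ ht w (mu w x + 1) = ht w x := Nat.sInf_mem hne
  obtain ⟨h1, h2⟩ := hmem
  have hleM : mu w x < M := lt_of_le_of_lt (Nat.sInf_le hmemy) (by omega)
  have hexc : ∀ t, x < t → t ≤ mu w x → ht w x < ht w t := by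
    intro t ht1 ht2
    by_contra hc
    push_neg at hc
    obtain ⟨n', hn1', hn2', hn3'⟩ := walk_ivt' (ht w) (ht_step w) (x+1) t (by omega)
      (ht w x) (by omega) hc
    have hne' : n' ≠ x + 1 := by intro h; rw [h] at hn3'; omega
    have : (n'-1) ∉ {y | x < y ∧ ht w (y+1) = ht w x} :=
      Nat.notMem_of_lt_sInf (by omega : n' - 1 < mu w x)
    apply this
    constructor
    · show x < n' - 1; omega
    · show ht w (n'-1+1) = ht w x
      have : n' - 1 + 1 = n' := by omega
      rw [this, hn3']
  refine ⟨h1, hleM, h2, ?_, hexc⟩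
  by_contra hc
  have hc' : wext w (mu w x) = true := by simpa using hc
  have e1 := ht_succ_true w hc'
  have e2 := hexc (mu w x) h1 le_rfl
  omega

include hbal htot in
lemma nu_spec {y : ℕ} (hy : y < M) (hwy : wext w y = false) :
    nu w y < y ∧ ht w (nu w y) = ht w (y+1) ∧ wext w (nu w y) = true ∧
      (∀ t, nu w y < t → t ≤ y → ht w (nu w y) < ht w t) := by
  set v := ht w (y+1) with hv
  have hp : ht w y = v + 1 := by have := ht_succ_false w hwy; omega
  have hv0 : 0 ≤ v := hbal (y+1) (by omega)
  have hy0 : 0 < y := by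
    rcases Nat.eq_zero_or_pos y with h | h
    · exfalso; rw [h] at hp; simp [ht] at hp; omega
    · exact h
  obtain ⟨n, hn1, hn2, hn3⟩ := walk_ivt (ht w) (ht_step w) 0 y (by omega)
    v (by simp [ht]; omega) (by omega)
  have hny : n ≠ y := by intro h; rw [h] at hn3; omega
  have hnle : n ≤ y - 1 := by omega
  have hspec : ht w (nu w y) = v := Nat.findGreatest_spec (P := fun x => ht w x = ht w (y+1)) hnle hn3
  have hnule : nu w y ≤ y - 1 := Nat.findGreatest_le _
  have hnult : nu w y < y := by omega
  have hexc : ∀ t, nu w y < t → t ≤ y → ht w (nu w y) < ht w t := by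
    intro t ht1 ht2
    rw [hspec]
    by_contra hc
    push_neg at hc
    have hty : t ≠ y := by intro h; rw [h] at hc; omega
    obtain ⟨n', hn1', hn2', hn3'⟩ := walk_ivt (ht w) (ht_step w) t y (by omega)
      v hc (by omega)
    have hn'y : n' ≠ y := by intro h; rw [h] at hn3'; omega
    have heq : nu w y = Nat.findGreatest (fun x => ht w x = ht w (y+1)) (y-1) := rfl
    exact Nat.findGreatest_is_greatest (P := fun x => ht w x = ht w (y+1)) (n := y - 1) (k := n') (by omega) (by omega) hn3'
  refine ⟨hnult, hspec, ?_, hexc⟩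
  by_contra hc
  have hc' : wext w (nu w y) = false := by simpa using hc
  have e1 := ht_succ_false w hc'
  have e2 := hexc (nu w y + 1) (by omega) (by omega)
  omega

include hbal htot in
lemma nu_mu {x : ℕ} (hx : x < M) (hwx : wext w x = true) : nu w (mu w x) = x := by
  obtain ⟨h1, h2, h3, h4, h5⟩ := mu_spec w hbal htot hx hwx
  set y := mu w x
  have hxle : x ≤ y - 1 := by omega
  have hPx : ht w x = ht w (y+1) := h3.symm
  have hge : x ≤ nu w y := Nat.le_findGreatest hxle hPx
  have hle : nu w y ≤ y - 1 := Nat.findGreatest_le _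
  rcases eq_or_lt_of_le hge with h | h
  · exact h.symm
  · exfalso
    have hP : ht w (nu w y) = ht w (y+1) := Nat.findGreatest_spec (P := fun x => ht w x = ht w (y+1)) hxle hPx
    have := h5 (nu w y) h (by omega)
    omega

include hbal htot in
lemma mu_nu {y : ℕ} (hy : y < M) (hwy : wext w y = false) : mu w (nu w y) = y := by
  obtain ⟨h1, h2, h3, h4⟩ := nu_spec w hbal htot hy hwy
  exact mu_unique w h1 h2.symm (fun t ht1 ht2 => h4 t ht1 ht2)

end Spec


section Main
variable {p N : ℕ} (r : Fin p → ℕ) (f : Fin (2 * N) → Fin p)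

def cps (k : Fin p) : ℕ := ∑ i ∈ univ.filter (fun i => i < k), r i

lemma cps_succ (k : Fin p) : ∑ i ∈ univ.filter (fun i => i ≤ k), r i = cps r k + r k := by
  have h : univ.filter (fun i => i ≤ k) = insert k (univ.filter (fun i => i < k)) := by
    ext i; simp [Finset.mem_insert, le_iff_lt_or_eq, or_comm, eq_comm]
  rw [h, Finset.sum_insert (by simp), cps, add_comm]

section F
variable (hN : 2 * N = ∑ i, r i)
  (hf : ∀ (x : Fin (2 * N)) (k : Fin p), f x = k ↔
      (∑ i ∈ Finset.univ.filter (fun i => i < k), r i) ≤ (x : ℕ) ∧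
        (x : ℕ) < ∑ i ∈ Finset.univ.filter (fun i => i ≤ k), r i)

include hf in
lemma hfx : ∀ (x : Fin (2 * N)) (k : Fin p),
    f x = k ↔ cps r k ≤ (x : ℕ) ∧ (x : ℕ) < cps r k + r k := by
  intro x k
  rw [hf x k, cps_succ]
  rfl

include hN in
lemma cps_add_le (k : Fin p) : cps r k + r k ≤ 2 * N := by
  rw [hN, ← cps_succ]
  exact Finset.sum_le_sum_of_subset (by intro i _; simp)

lemma cps_le_cps {j k : Fin p} (hjk : j < k) : cps r j + r j ≤ cps r k := by
  rw [← cps_succ]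
  exact Finset.sum_le_sum_of_subset (by intro i hi; simp at hi ⊢; omega)

include hf in
lemma f_lower (x : Fin (2 * N)) : cps r (f x) ≤ (x : ℕ) := ((hfx r f hf x (f x)).1 rfl).1

include hf in
lemma f_upper (x : Fin (2 * N)) : (x : ℕ) < cps r (f x) + r (f x) := ((hfx r f hf x (f x)).1 rfl).2

include hf in
lemma f_mono : Monotone f := by
  intro x y hxy
  by_contra hc
  push_neg at hc
  have h1 := f_lower r f hf x
  have h2 := f_upper r f hf y
  have h3 := cps_le_cps r (hc : f y < f x)
  have : (x : ℕ) ≤ (y : ℕ) := hxy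
  omega

include hN hf in
lemma block_card (k : Fin p) : (univ.filter fun x : Fin (2 * N) => f x = k).card = r k := by
  have h : (univ.filter fun x : Fin (2 * N) => f x = k)
      = univ.filter (fun x : Fin (2 * N) => cps r k ≤ (x : ℕ) ∧ (x : ℕ) < cps r k + r k) := by
    ext x; simp only [mem_filter, mem_univ, true_and]; exact hfx r f hf x k
  rw [h, card_filter_ico _ _ (cps_add_le r hN k)]
  omega

end F

/-- the words corresponding to both sides -/
def IsWord (w : Fin (2 * N) → Bool) : Prop :=
  (∀ x : Fin (2 * N), w x = false →
     (univ.filter fun y : Fin (2 * N) => y < x ∧ w y = false).card <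
     (univ.filter fun y : Fin (2 * N) => y < x ∧ w y = true).card) ∧
  (univ.filter fun x : Fin (2 * N) => w x = true).card = N ∧
  (∀ s t : Fin (2 * N), s ≤ t → f s = f t → w s = true → w t = true)

variable {f} in
lemma cnt_lt_eq (w : Fin (2 * N) → Bool) (x : Fin (2 * N)) (b : Bool) :
    (univ.filter fun y : Fin (2 * N) => y < x ∧ w y = b).card
      = ((Finset.range (x : ℕ)).filter fun t => wext w t = b).card := by
  apply Finset.card_bij (fun (y : Fin (2 * N)) _ => (y : ℕ))
  · intro y hy
    simp only [mem_filter, mem_univ, true_and] at hy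
    simp only [mem_filter, Finset.mem_range]
    refine ⟨hy.1, ?_⟩
    rw [wext, dif_pos y.isLt]
    simpa using hy.2
  · intro a _ b _ h; exact Fin.val_injective h
  · intro t hyt
    simp only [mem_filter, Finset.mem_range] at hyt
    have htN : t < 2 * N := lt_trans hyt.1 x.isLt
    refine ⟨⟨t, htN⟩, ?_, rfl⟩
    simp only [mem_filter, mem_univ, true_and]
    constructor
    · exact hyt.1
    · have := hyt.2; rwa [wext, dif_pos htN] at this

lemma cnt_all_eq (w : Fin (2 * N) → Bool) (b : Bool) :
    (univ.filter fun y : Fin (2 * N) => w y = b).card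
      = ((Finset.range (2 * N)).filter fun t => wext w t = b).card := by
  apply Finset.card_bij (fun (y : Fin (2 * N)) _ => (y : ℕ))
  · intro y hy
    simp only [mem_filter, mem_univ, true_and] at hy
    simp only [mem_filter, Finset.mem_range]
    refine ⟨y.isLt, ?_⟩
    rw [wext, dif_pos y.isLt]
    simpa using hy
  · intro a _ b _ h; exact Fin.val_injective h
  · intro t hyt
    simp only [mem_filter, Finset.mem_range] at hyt
    refine ⟨⟨t, hyt.1⟩, ?_, rfl⟩
    simp only [mem_filter, mem_univ, true_and]
    have := hyt.2; rwa [wext, dif_pos hyt.1] at this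

lemma ht_eq_counts (w : Fin (2 * N) → Bool) (n : ℕ) :
    ht w n = (((Finset.range n).filter fun t => wext w t = true).card : ℤ)
      - ((Finset.range n).filter fun t => wext w t = false).card := by
  have := ht_sub w 0 n (Nat.zero_le n)
  rw [Finset.range_eq_Ico]
  simpa [ht] using this

variable {r f}

lemma isword_ht_nonneg {w : Fin (2 * N) → Bool} (hw : IsWord f w) :
    ∀ n, n ≤ 2 * N → 0 ≤ ht w n := by
  intro n hn
  induction n with
  | zero => simp [ht]
  | succ n ih =>
    have hn' : n < 2 * N := by omega
    have ihn := ih (by omega)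
    by_cases hb : wext w n = true
    · rw [ht_succ_true w hb]; omega
    · have hb' : wext w n = false := by simpa using hb
      have hwn : w ⟨n, hn'⟩ = false := by rwa [wext, dif_pos hn'] at hb'
      have := hw.1 ⟨n, hn'⟩ hwn
      rw [cnt_lt_eq w _ false, cnt_lt_eq w _ true] at this
      have hcnt := ht_eq_counts w n
      rw [ht_succ_false w hb']
      simp only at this hcnt
      omega

lemma isword_ht_total {w : Fin (2 * N) → Bool} (hw : IsWord f w) :
    ht w (2 * N) = 0 := by
  have h1 := hw.2.1
  rw [cnt_all_eq w true] at h1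
  have h2 : ((Finset.range (2*N)).filter fun t => wext w t = true).card
      + ((Finset.range (2*N)).filter fun t => wext w t = false).card = 2 * N := by
    have := Finset.card_filter_add_card_filter_not
      (s := Finset.range (2*N)) (p := fun t => wext w t = true)
    simp only [Bool.not_eq_true, Finset.card_range] at this
    exact this
  have hcnt := ht_eq_counts w (2 * N)
  omega

end Main


section Match
variable {p N : ℕ} {r : Fin p → ℕ} {f : Fin (2 * N) → Fin p}

def toWord (m : Fin (2 * N) → Fin (2 * N)) : Fin (2 * N) → Bool :=
  fun x => decide (x < m x)

section MatchForward
variable {m : Fin (2 * N) → Fin (2 * N)}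

lemma toWord_true_iff (x : Fin (2 * N)) : toWord m x = true ↔ x < m x := by
  simp [toWord]

variable (hm1 : ∀ x, m (m x) = x) (hm2 : ∀ x, m x ≠ x)
  (hm3 : ¬ ∃ a b : Fin (2 * N), a < b ∧ b < m a ∧ m a < m b)

include hm2 in
lemma toWord_false_iff (x : Fin (2 * N)) : toWord m x = false ↔ m x < x := by
  simp only [toWord, decide_eq_false_iff_not, not_lt]
  exact ⟨fun h => lt_of_le_of_ne h (hm2 x), le_of_lt⟩

include hm1 in
lemma minj : Function.Injective m := by
  intro a b h
  have := congrArg m h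
  rwa [hm1, hm1] at this

include hm1 hm3 in
lemma hnc : ∀ a b : Fin (2 * N), a < b → b < m a → m b < m a := by
  intro a b h1 h2
  push_neg at hm3
  have h3 := hm3 a b h1 h2
  rcases lt_or_eq_of_le h3 with h | h
  · exact h
  · exact absurd (minj hm1 h) (ne_of_gt h1)

include hm1 hm3 in
lemma hinv : ∀ x u : Fin (2 * N), x < m x → x < u → u < m x →
    x < m u ∧ m u < m x := by
  intro x u hx h1 h2
  constructor
  · by_contra hc
    push_neg at hc
    have hne : m u ≠ x := by
      intro h
      have hux : u = m x := by rw [← hm1 u, h]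
      rw [hux] at h2; exact lt_irrefl _ h2
    have hlt : m u < x := lt_of_le_of_ne hc hne
    have := hnc hm1 hm3 (m u) x hlt (by rw [hm1]; exact h1)
    rw [hm1] at this
    exact absurd h2 (not_lt_of_gt this)
  · by_cases hu : u < m u
    · exact hnc hm1 hm3 x u h1 h2
    · push_neg at hu
      exact lt_of_le_of_lt hu h2
end MatchForward
end Match


section Match2
variable {p N : ℕ} {r : Fin p → ℕ} {f : Fin (2 * N) → Fin p}
variable {m : Fin (2 * N) → Fin (2 * N)}
  (hm1 : ∀ x, m (m x) = x) (hm2 : ∀ x, m x ≠ x)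
  (hm3 : ¬ ∃ a b : Fin (2 * N), a < b ∧ b < m a ∧ m a < m b)
  (hm4 : ∀ x, f (m x) ≠ f x)

include hm1 hm2 hm3 hm4 in
lemma match_blockmono (hmono : Monotone f) :
    ∀ s t : Fin (2 * N), s ≤ t → f s = f t → toWord m s = true → toWord m t = true := by
  intro s t hst hfe hs
  rw [toWord_true_iff] at hs ⊢
  rcases eq_or_lt_of_le hst with h | hlt
  · rwa [← h]
  by_contra hc
  push_neg at hc
  have hct : m t < t := lt_of_le_of_ne hc (hm2 t)
  have fmid : ∀ u : Fin (2 * N), s ≤ u → u ≤ t → f u = f s :=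
    fun u h1 h2 => le_antisymm (hfe ▸ hmono h2) (hmono h1)
  have hms : t < m s := by
    by_contra hc2
    push_neg at hc2
    exact hm4 s (fmid (m s) (le_of_lt hs) hc2)
  have hmt : m t < s := by
    by_contra hc2
    push_neg at hc2
    exact hm4 t ((fmid (m t) hc2 (le_of_lt hct)).trans hfe)
  have := hnc hm1 hm3 (m t) s hmt (by rw [hm1]; exact hlt)
  rw [hm1] at this
  exact absurd hms (not_lt_of_gt this)

include hm1 hm2 in
lemma match_bal (x : Fin (2 * N)) (hx : m x < x) :
    (univ.filter fun y : Fin (2 * N) => y < x ∧ m y < y).card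
      < (univ.filter fun y : Fin (2 * N) => y < x ∧ y < m y).card := by
  set A := univ.filter fun y : Fin (2 * N) => y < x ∧ m y < y with hA
  set B := univ.filter fun y : Fin (2 * N) => y < x ∧ y < m y with hB
  have himg : insert (m x) (A.image m) ⊆ B := by
    intro z hz
    rcases Finset.mem_insert.mp hz with h | h
    · rw [h, hB, mem_filter]
      refine ⟨mem_univ _, hx, ?_⟩
      rw [hm1]; exact hx
    · obtain ⟨y, hy, rfl⟩ := Finset.mem_image.mp h
      rw [hA, mem_filter] at hy
      rw [hB, mem_filter]
      refine ⟨mem_univ _, lt_trans hy.2.2 hy.2.1, ?_⟩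
      rw [hm1]; exact hy.2.2
  have hni : m x ∉ A.image m := by
    intro h
    obtain ⟨y, hy, he⟩ := Finset.mem_image.mp h
    have : y = x := minj hm1 he
    rw [hA, mem_filter, this] at hy
    exact lt_irrefl _ hy.2.1
  have hcard : (insert (m x) (A.image m)).card = A.card + 1 := by
    rw [Finset.card_insert_of_notMem hni,
      Finset.card_image_of_injective _ (minj hm1)]
  have := Finset.card_le_card himg
  omega

include hm1 hm2 in
lemma match_total : (univ.filter fun x : Fin (2 * N) => x < m x).card = N := by
  set O := univ.filter fun x : Fin (2 * N) => x < m x with hO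
  set C := univ.filter fun x : Fin (2 * N) => m x < x with hC
  have h1 : O.card = C.card := by
    apply Finset.card_bij' (fun (y : Fin (2*N)) _ => m y) (fun (y : Fin (2*N)) _ => m y)
    · intro a ha
      rw [hO, mem_filter] at ha
      rw [hC, mem_filter, hm1]
      exact ⟨mem_univ _, ha.2⟩
    · intro a ha
      rw [hC, mem_filter] at ha
      rw [hO, mem_filter, hm1]
      exact ⟨mem_univ _, ha.2⟩
    · intro a _; rw [hm1]
    · intro a _; rw [hm1]
  have h2 : O.card + C.card = 2 * N := by
    have h3 := Finset.card_filter_add_card_filter_not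
      (s := (univ : Finset (Fin (2*N)))) (p := fun x => x < m x)
    have h4 : (univ.filter fun x : Fin (2*N) => ¬ x < m x) = C := by
      ext y
      rw [hC, mem_filter, mem_filter]
      simp only [mem_univ, true_and, not_lt]
      exact ⟨fun h => lt_of_le_of_ne h (hm2 y), le_of_lt⟩
    rw [h4] at h3
    rw [← hO] at h3
    simpa using h3
  omega

include hm1 hm2 hm3 hm4 in
lemma match_isword (hmono : Monotone f) : IsWord f (toWord m) := by
  refine ⟨?_, ?_, match_blockmono hm1 hm2 hm3 hm4 hmono⟩
  · intro x hx
    rw [toWord_false_iff hm2] at hx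
    have key := match_bal hm1 hm2 x hx
    have e1 : (univ.filter fun y : Fin (2*N) => y < x ∧ toWord m y = false)
        = univ.filter fun y : Fin (2*N) => y < x ∧ m y < y := by
      ext y; simp only [mem_filter, mem_univ, true_and, toWord_false_iff hm2]
    have e2 : (univ.filter fun y : Fin (2*N) => y < x ∧ toWord m y = true)
        = univ.filter fun y : Fin (2*N) => y < x ∧ y < m y := by
      ext y; simp only [mem_filter, mem_univ, true_and, toWord_true_iff]
    rw [e1, e2]
    exact key
  · have e : (univ.filter fun x : Fin (2*N) => toWord m x = true)
        = univ.filter fun x : Fin (2*N) => x < m x := by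
      ext y; simp only [mem_filter, mem_univ, true_and, toWord_true_iff]
    rw [e]
    exact match_total hm1 hm2

end Match2


section Match3
variable {p N : ℕ} {r : Fin p → ℕ} {f : Fin (2 * N) → Fin p}
variable {m : Fin (2 * N) → Fin (2 * N)}
  (hm1 : ∀ x, m (m x) = x) (hm2 : ∀ x, m x ≠ x)
  (hm3 : ¬ ∃ a b : Fin (2 * N), a < b ∧ b < m a ∧ m a < m b)

/-- the natural-number version of m -/
def mnat (m : Fin (2 * N) → Fin (2 * N)) (u : ℕ) : ℕ :=
  if h : u < 2 * N then (m ⟨u, h⟩ : ℕ) else u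

lemma mnat_coe (m : Fin (2 * N) → Fin (2 * N)) (U : Fin (2 * N)) :
    mnat m (U : ℕ) = (m U : ℕ) := by
  simp [mnat]

include hm1 hm2 hm3 in
lemma match_exc (x : Fin (2 * N)) (hx : x < m x) (t : ℕ)
    (h1 : (x : ℕ) < t) (h2 : t ≤ (m x : ℕ)) :
    ht (toWord m) (x : ℕ) < ht (toWord m) t := by
  set w := toWord m with hw
  have hsub := ht_sub w (x : ℕ) t (by omega)
  set Ot := (Finset.Ico (x:ℕ) t).filter (fun u => wext w u = true) with hOt
  set Ct := (Finset.Ico (x:ℕ) t).filter (fun u => wext w u = false) with hCt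
  have hkey : Ct.card + 1 ≤ Ot.card := by
    have himg : insert (x:ℕ) (Ct.image (mnat m)) ⊆ Ot := by
      intro z hz
      rcases Finset.mem_insert.mp hz with h | h
      · rw [h, hOt, mem_filter]
        refine ⟨Finset.mem_Ico.mpr ⟨le_refl _, h1⟩, ?_⟩
        rw [wext_coe, hw, toWord_true_iff]
        exact hx
      · obtain ⟨u, hu, rfl⟩ := Finset.mem_image.mp h
        rw [hCt, mem_filter, Finset.mem_Ico] at hu
        have huN : u < 2 * N := by
          have := x.isLt; have := (m x).isLt; omega
        set U : Fin (2 * N) := ⟨u, huN⟩ with hU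
        have hUval : (U : ℕ) = u := rfl
        have hwU : w U = false := by rw [← wext_coe w U]; exact hu.2
        have hcU : m U < U := by rwa [hw, toWord_false_iff hm2] at hwU
        have hne : U ≠ x := by
          intro h
          rw [h] at hwU
          rw [hw, toWord_false_iff hm2] at hwU
          exact absurd hx (not_lt_of_gt hwU)
        have hxU : x < U := by
          rcases lt_or_eq_of_le hu.1.1 with h | h
          · rw [Fin.lt_def, hUval]; exact h
          · exact absurd (Fin.val_injective (show (U:ℕ) = (x:ℕ) from h.symm)) hne
        have hUmx : U < m x := by rw [Fin.lt_def, hUval]; omega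
        obtain ⟨hi1, hi2⟩ := hinv hm1 hm3 x U hx hxU hUmx
        rw [hOt, mem_filter, Finset.mem_Ico]
        have hval : mnat m u = ((m U : Fin (2*N)) : ℕ) := by rw [← hUval, mnat_coe]
        rw [hval]
        refine ⟨⟨le_of_lt hi1, ?_⟩, ?_⟩
        · have : (m U : ℕ) < u := hcU
          omega
        · rw [wext_coe, hw, toWord_true_iff, hm1]
          exact hcU
    have hni : (x:ℕ) ∉ Ct.image (mnat m) := by
      intro h
      obtain ⟨u, hu, he⟩ := Finset.mem_image.mp h
      rw [hCt, mem_filter, Finset.mem_Ico] at hu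
      have huN : u < 2 * N := by
        have := x.isLt; have := (m x).isLt; omega
      have he2 : ((m ⟨u, huN⟩ : Fin (2*N)) : ℕ) = (x : ℕ) := by
        rw [← he, ← mnat_coe m ⟨u, huN⟩]
      have h3 : m ⟨u, huN⟩ = x := Fin.val_injective he2
      have h4 : (⟨u, huN⟩ : Fin (2*N)) = m x := by rw [← hm1 ⟨u, huN⟩, h3]
      have h5 : u = (m x : ℕ) := congrArg Fin.val h4
      omega
    have hio : Set.InjOn (mnat m) Ct := by
      intro u hu v hv he
      rw [hCt, mem_coe, mem_filter, Finset.mem_Ico] at hu hv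
      have huN : u < 2 * N := by have := (m x).isLt; omega
      have hvN : v < 2 * N := by have := (m x).isLt; omega
      have he2 : ((m ⟨u, huN⟩ : Fin (2*N)) : ℕ) = ((m ⟨v, hvN⟩ : Fin (2*N)) : ℕ) := by
        rw [← mnat_coe m ⟨u, huN⟩, ← mnat_coe m ⟨v, hvN⟩]
        exact he
      have := minj hm1 (Fin.val_injective he2)
      exact congrArg Fin.val this
    have h5 : (insert (x:ℕ) (Ct.image (mnat m))).card = Ct.card + 1 := by
      rw [Finset.card_insert_of_notMem hni, Finset.card_image_of_injOn hio]
    have := Finset.card_le_card himg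
    omega
  omega

include hm1 hm2 hm3 in
lemma match_ret (x : Fin (2 * N)) (hx : x < m x) :
    ht (toWord m) ((m x : ℕ) + 1) = ht (toWord m) (x : ℕ) := by
  set w := toWord m with hw
  have hsub := ht_sub w (x : ℕ) ((m x : ℕ) + 1) (by have := Fin.lt_def.mp hx; omega)
  have hbij : ((Finset.Ico (x:ℕ) ((m x : ℕ)+1)).filter (fun u => wext w u = true)).card
      = ((Finset.Ico (x:ℕ) ((m x : ℕ)+1)).filter (fun u => wext w u = false)).card := by
    apply Finset.card_bij' (fun u _ => mnat m u) (fun u _ => mnat m u)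
    · intro u hu
      rw [mem_filter, Finset.mem_Ico] at hu
      have huN : u < 2 * N := by have := (m x).isLt; omega
      set U : Fin (2 * N) := ⟨u, huN⟩ with hU
      have hUval : (U : ℕ) = u := rfl
      have hwU : w U = true := by rw [← wext_coe w U]; exact hu.2
      have hoU : U < m U := by rwa [hw, toWord_true_iff] at hwU
      rw [← hUval, mnat_coe, mem_filter, Finset.mem_Ico]
      have hUne : U ≠ m x := by
        intro h
        rw [h, hw, toWord_true_iff] at hwU
        rw [hm1] at hwU
        exact absurd (lt_trans hx hwU) (lt_irrefl _)
      rcases eq_or_lt_of_le (show (x:ℕ) ≤ u from hu.1.1) with h | h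
      · have : U = x := Fin.val_injective (show (U:ℕ) = (x:ℕ) from h.symm)
        rw [this]
        refine ⟨⟨le_of_lt (Fin.lt_def.mp hx), by omega⟩, ?_⟩
        rw [wext_coe, hw, toWord_false_iff hm2, hm1]
        exact hx
      · have hxU : x < U := h
        have hUmx : U < m x := by
          have h2 : u ≤ (m x : ℕ) := by omega
          rcases lt_or_eq_of_le h2 with h | h
          · rw [Fin.lt_def, hUval]; exact h
          · exact absurd (Fin.val_injective (show (U:ℕ) = ((m x):ℕ) from h)) hUne
        obtain ⟨hi1, hi2⟩ := hinv hm1 hm3 x U hx hxU hUmx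
        refine ⟨⟨le_of_lt hi1, by have := Fin.lt_def.mp hi2; omega⟩, ?_⟩
        rw [wext_coe, hw, toWord_false_iff hm2, hm1]
        exact hoU
    · intro u hu
      rw [mem_filter, Finset.mem_Ico] at hu
      have huN : u < 2 * N := by have := (m x).isLt; omega
      set U : Fin (2 * N) := ⟨u, huN⟩ with hU
      have hUval : (U : ℕ) = u := rfl
      have hwU : w U = false := by rw [← wext_coe w U]; exact hu.2
      have hcU : m U < U := by rwa [hw, toWord_false_iff hm2] at hwU
      rw [← hUval, mnat_coe, mem_filter, Finset.mem_Ico]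
      have hUne : U ≠ x := by
        intro h
        rw [h, hw, toWord_false_iff hm2] at hwU
        exact absurd hx (not_lt_of_gt hwU)
      have hxU : x < U := by
        rcases eq_or_lt_of_le (show (x:ℕ) ≤ u from hu.1.1) with h | h
        · exact absurd (Fin.val_injective (show (U:ℕ) = (x:ℕ) from h.symm)) hUne
        · rw [Fin.lt_def, hUval]; exact h
      rcases eq_or_lt_of_le (show u ≤ (m x:ℕ) from by omega) with h | h
      · have hUmx : U = m x := Fin.val_injective (show (U:ℕ) = ((m x):ℕ) from h)
        rw [hUmx, hm1]
        refine ⟨⟨le_refl _, by have := Fin.lt_def.mp hx; omega⟩, ?_⟩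
        rw [wext_coe, hw, toWord_true_iff]
        exact hx
      · have hUmx : U < m x := h
        obtain ⟨hi1, hi2⟩ := hinv hm1 hm3 x U hx hxU hUmx
        refine ⟨⟨le_of_lt hi1, by have := Fin.lt_def.mp hi2; omega⟩, ?_⟩
        rw [wext_coe, hw, toWord_true_iff, hm1]
        exact hcU
    · intro u hu
      rw [mem_filter, Finset.mem_Ico] at hu
      have huN : u < 2 * N := by have := (m x).isLt; omega
      have hUval : ((⟨u, huN⟩ : Fin (2*N)) : ℕ) = u := rfl
      rw [← hUval, mnat_coe, mnat_coe, hm1]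
    · intro u hu
      rw [mem_filter, Finset.mem_Ico] at hu
      have huN : u < 2 * N := by have := (m x).isLt; omega
      have hUval : ((⟨u, huN⟩ : Fin (2*N)) : ℕ) = u := rfl
      rw [← hUval, mnat_coe, mnat_coe, hm1]
  omega

include hm1 hm2 hm3 in
lemma match_mu (x : Fin (2 * N)) (hx : x < m x) :
    mu (toWord m) (x : ℕ) = (m x : ℕ) := by
  exact mu_unique (toWord m) (Fin.lt_def.mp hx) (match_ret hm1 hm2 hm3 x hx)
    (match_exc hm1 hm2 hm3 x hx)

end Match3


section Match4
variable {p N : ℕ} {r : Fin p → ℕ} {f : Fin (2 * N) → Fin p}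

noncomputable def toMatch (w : Fin (2 * N) → Bool) (x : Fin (2 * N)) : Fin (2 * N) :=
  if w x = true then ⟨mu w (x : ℕ) % (2 * N), Nat.mod_lt _ x.pos⟩
  else ⟨nu w (x : ℕ) % (2 * N), Nat.mod_lt _ x.pos⟩

variable {w : Fin (2 * N) → Bool} (hw : IsWord f w)

include hw in
lemma tm_open {x : Fin (2 * N)} (hx : w x = true) :
    (toMatch w x : ℕ) = mu w (x : ℕ) ∧ (x : ℕ) < mu w (x : ℕ) ∧ mu w (x : ℕ) < 2 * N ∧
      ht w (mu w (x:ℕ) + 1) = ht w (x:ℕ) ∧ w (toMatch w x) = false ∧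
      (∀ t, (x:ℕ) < t → t ≤ mu w (x:ℕ) → ht w (x:ℕ) < ht w t) := by
  have hbal := isword_ht_nonneg hw
  have htot := isword_ht_total hw
  obtain ⟨s1, s2, s3, s4, s5⟩ := mu_spec w hbal htot x.isLt (by rw [wext_coe]; exact hx)
  have hval : (toMatch w x : ℕ) = mu w (x : ℕ) := by
    rw [toMatch, if_pos hx]
    exact Nat.mod_eq_of_lt s2
  refine ⟨hval, s1, s2, s3, ?_, s5⟩
  rw [← wext_coe w (toMatch w x), hval]
  exact s4

include hw in
lemma tm_closed {x : Fin (2 * N)} (hx : w x = false) :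
    (toMatch w x : ℕ) = nu w (x : ℕ) ∧ nu w (x : ℕ) < (x : ℕ) ∧
      ht w (nu w (x:ℕ)) = ht w ((x:ℕ) + 1) ∧ w (toMatch w x) = true := by
  have hbal := isword_ht_nonneg hw
  have htot := isword_ht_total hw
  obtain ⟨s1, s2, s3, s4⟩ := nu_spec w hbal htot x.isLt (by rw [wext_coe]; exact hx)
  have hval : (toMatch w x : ℕ) = nu w (x : ℕ) := by
    rw [toMatch, if_neg (by simp [hx])]
    exact Nat.mod_eq_of_lt (lt_trans s1 x.isLt)
  refine ⟨hval, s1, s2, ?_⟩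
  rw [← wext_coe w (toMatch w x), hval]
  exact s3

include hw in
lemma tm_invol : ∀ x, toMatch w (toMatch w x) = x := by
  have hbal := isword_ht_nonneg hw
  have htot := isword_ht_total hw
  intro x
  by_cases hx : w x = true
  · obtain ⟨v1, v2, v3, v4, v5, v6⟩ := tm_open hw hx
    obtain ⟨u1, u2, u3, u4⟩ := tm_closed hw v5
    apply Fin.val_injective
    rw [u1, v1]
    exact nu_mu w hbal htot x.isLt (by rw [wext_coe]; exact hx)
  · have hx' : w x = false := by simpa using hx
    obtain ⟨v1, v2, v3, v4⟩ := tm_closed hw hx'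
    obtain ⟨u1, u2, u3, u4, u5, u6⟩ := tm_open hw v4
    apply Fin.val_injective
    rw [u1, v1]
    exact mu_nu w hbal htot x.isLt (by rw [wext_coe]; exact hx')

include hw in
lemma tm_fpf : ∀ x, toMatch w x ≠ x := by
  intro x h
  by_cases hx : w x = true
  · have := (tm_open hw hx).2.1
    rw [← (tm_open hw hx).1, h] at this
    exact lt_irrefl _ this
  · have hx' : w x = false := by simpa using hx
    have := (tm_closed hw hx').2.1
    rw [← (tm_closed hw hx').1, h] at this
    exact lt_irrefl _ this

include hw in
lemma tm_noncross :
    ¬ ∃ a b : Fin (2 * N), a < b ∧ b < toMatch w a ∧ toMatch w a < toMatch w b := by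
  rintro ⟨a, b, h1, h2, h3⟩
  have hwa : w a = true := by
    by_contra hc
    have hc' : w a = false := by simpa using hc
    have := (tm_closed hw hc').2.1
    rw [← (tm_closed hw hc').1] at this
    have hab : (a:ℕ) < (b:ℕ) := h1
    have hbm : (b:ℕ) < (toMatch w a : ℕ) := h2
    omega
  have hwb : w b = true := by
    by_contra hc
    have hc' : w b = false := by simpa using hc
    have := (tm_closed hw hc').2.1
    rw [← (tm_closed hw hc').1] at this
    have hab : (b:ℕ) < (toMatch w a :ℕ) := h2
    have hbm : (toMatch w a : ℕ) < (toMatch w b : ℕ) := h3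
    omega
  obtain ⟨a1, a2, a3, a4, a5, a6⟩ := tm_open hw hwa
  obtain ⟨b1, b2, b3, b4, b5, b6⟩ := tm_open hw hwb
  have hab : (a:ℕ) < (b:ℕ) := h1
  have h2' : (b:ℕ) < mu w (a:ℕ) := by rw [← a1]; exact h2
  have h3' : mu w (a:ℕ) < mu w (b:ℕ) := by rw [← a1, ← b1]; exact h3
  have e1 : ht w (a:ℕ) < ht w (b:ℕ) := a6 (b:ℕ) hab (by omega)
  have e2 : ht w (b:ℕ) < ht w (mu w (a:ℕ) + 1) := b6 _ (by omega) (by omega)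
  rw [a4] at e2
  omega

include hw in
lemma tm_fcond : ∀ x, f (toMatch w x) ≠ f x := by
  intro x hfe
  by_cases hx : w x = true
  · obtain ⟨v1, v2, v3, v4, v5, v6⟩ := tm_open hw hx
    have hle : x ≤ toMatch w x := by
      rw [Fin.le_def, v1]; omega
    have := hw.2.2 x (toMatch w x) hle hfe.symm hx
    rw [v5] at this
    exact Bool.false_ne_true this
  · have hx' : w x = false := by simpa using hx
    obtain ⟨v1, v2, v3, v4⟩ := tm_closed hw hx'
    have hle : toMatch w x ≤ x := by
      rw [Fin.le_def, v1]; omega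
    have := hw.2.2 (toMatch w x) x hle hfe v4
    rw [hx'] at this
    exact Bool.false_ne_true this

include hw in
lemma tm_toWord : toWord (toMatch w) = w := by
  funext x
  by_cases hx : w x = true
  · rw [hx]
    apply (toWord_true_iff x).mpr
    rw [Fin.lt_def, (tm_open hw hx).1]
    exact (tm_open hw hx).2.1
  · have hx' : w x = false := by simpa using hx
    rw [hx']
    simp only [toWord, decide_eq_false_iff_not, not_lt, Fin.le_def]
    rw [(tm_closed hw hx').1]
    exact le_of_lt (tm_closed hw hx').2.1

end Match4

section Match5
variable {p N : ℕ} {r : Fin p → ℕ} {f : Fin (2 * N) → Fin p}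
variable {m : Fin (2 * N) → Fin (2 * N)}
  (hm1 : ∀ x, m (m x) = x) (hm2 : ∀ x, m x ≠ x)
  (hm3 : ¬ ∃ a b : Fin (2 * N), a < b ∧ b < m a ∧ m a < m b)
  (hm4 : ∀ x, f (m x) ≠ f x)

include hm1 hm2 hm3 hm4 in
lemma tm_of_toWord (hmono : Monotone f) : toMatch (toWord m) = m := by
  have hw : IsWord f (toWord m) := match_isword hm1 hm2 hm3 hm4 hmono
  have hbal := isword_ht_nonneg hw
  have htot := isword_ht_total hw
  funext x
  rcases (hm2 x).lt_or_gt with hx | hx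
  · -- m x < x : closer
    have hopen : m x < m (m x) := by rw [hm1]; exact hx
    have hwx : toWord m x = false := (toWord_false_iff hm2 x).mpr hx
    obtain ⟨v1, _, _, _⟩ := tm_closed hw hwx
    apply Fin.val_injective
    rw [v1]
    have hmu : mu (toWord m) ((m x : Fin (2*N)) : ℕ) = (x : ℕ) := by
      have := match_mu hm1 hm2 hm3 (m x) hopen
      rwa [hm1] at this
    have := nu_mu (toWord m) hbal htot (m x).isLt
      (by rw [wext_coe]; exact (toWord_true_iff (m x)).mpr hopen)
    rwa [hmu] at this
  · -- opener
    have hwx : toWord m x = true := (toWord_true_iff x).mpr hx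
    obtain ⟨v1, _, _, _⟩ := tm_open hw hwx
    apply Fin.val_injective
    rw [v1]
    exact match_mu hm1 hm2 hm3 x hx

end Match5


section Tab
variable {p N : ℕ} (r : Fin p → ℕ) (f : Fin (2 * N) → Fin p)

/-- general: sum over `≤ k` splits -/
lemma sum_filter_le_split (g : Fin p → ℕ) (k : Fin p) :
    ∑ i ∈ univ.filter (fun i => i ≤ k), g i
      = (∑ i ∈ univ.filter (fun i => i < k), g i) + g k := by
  have h : univ.filter (fun i : Fin p => i ≤ k) = insert k (univ.filter (fun i => i < k)) := by
    ext i; simp [Finset.mem_insert, le_iff_lt_or_eq, or_comm, eq_comm]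
  rw [h, Finset.sum_insert (by simp), add_comm]

/-- fiberwise count over a finset of values -/
lemma card_fiberwise_setsum {n : ℕ} (g : Fin n → Fin p) (s : Finset (Fin p))
    (P : Fin n → Prop) [DecidablePred P] :
    (univ.filter fun c => g c ∈ s ∧ P c).card
      = ∑ j ∈ s, (univ.filter fun c => g c = j ∧ P c).card := by
  rw [Finset.card_eq_sum_card_fiberwise (f := g) (t := s)
    (fun x hx => (Finset.mem_filter.mp hx).2.1)]
  apply Finset.sum_congr rfl
  intro j hj
  congr 1
  ext c
  simp only [mem_filter, mem_univ, true_and]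
  constructor
  · rintro ⟨⟨_, h2⟩, h3⟩; exact ⟨h3, h2⟩
  · rintro ⟨h1, h2⟩; exact ⟨⟨h1 ▸ hj, h2⟩, h1⟩

def acnt (T : Fin 2 → Fin N → Fin p) (k : Fin p) : ℕ :=
  (univ.filter fun c => T 0 c = k).card
def bcnt (T : Fin 2 → Fin N → Fin p) (k : Fin p) : ℕ :=
  (univ.filter fun c => T 1 c = k).card

lemma prod_split (T : Fin 2 → Fin N → Fin p) (k : Fin p) :
    (univ.filter fun rc : Fin 2 × Fin N => T rc.1 rc.2 = k).card
      = acnt T k + bcnt T k := by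
  rw [Finset.card_eq_sum_card_fiberwise (f := Prod.fst) (t := univ) (fun x _ => mem_univ _)]
  rw [Fin.sum_univ_two]
  congr 1
  · apply Finset.card_bij (fun (rc : Fin 2 × Fin N) _ => rc.2)
    · intro a ha
      simp only [mem_filter, mem_univ, true_and] at ha ⊢
      rw [← ha.2]; exact ha.1
    · intro a ha b hb h
      simp only [mem_filter, mem_univ, true_and] at ha hb
      exact Prod.ext (ha.2.trans hb.2.symm) h
    · intro c hc
      simp only [mem_filter, mem_univ, true_and] at hc
      exact ⟨(0, c), by simp [hc], rfl⟩
  · apply Finset.card_bij (fun (rc : Fin 2 × Fin N) _ => rc.2)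
    · intro a ha
      simp only [mem_filter, mem_univ, true_and] at ha ⊢
      rw [← ha.2]; exact ha.1
    · intro a ha b hb h
      simp only [mem_filter, mem_univ, true_and] at ha hb
      exact Prod.ext (ha.2.trans hb.2.symm) h
    · intro c hc
      simp only [mem_filter, mem_univ, true_and] at hc
      exact ⟨(1, c), by simp [hc], rfl⟩

def toWordT (T : Fin 2 → Fin N → Fin p) : Fin (2 * N) → Bool :=
  fun x => decide (cps r (f x) + bcnt T (f x) ≤ (x : ℕ))

section TabForward
variable {T : Fin 2 → Fin N → Fin p}
  (hT1 : ∀ i : Fin 2, Monotone (T i)) (hT2 : ∀ c : Fin N, T 0 c < T 1 c)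
  (hT3 : ∀ k : Fin p, (univ.filter (fun rc : Fin 2 × Fin N => T rc.1 rc.2 = k)).card = r k)

include hT3 in
lemma weight_split (k : Fin p) : acnt T k + bcnt T k = r k := by
  rw [← prod_split]; exact hT3 k

lemma row_sum (i : Fin 2) :
    ∑ k, (univ.filter fun c => T i c = k).card = N := by
  have := Finset.card_eq_sum_card_fiberwise (f := T i) (s := (univ : Finset (Fin N)))
    (t := univ) (fun x _ => mem_univ _)
  simpa using this.symm

include hT2 in
lemma key_ineq (k : Fin p) :
    ∑ j ∈ univ.filter (fun j => j ≤ k), bcnt T j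
      ≤ ∑ j ∈ univ.filter (fun j => j < k), acnt T j := by
  have e1 : (univ.filter fun c : Fin N => T 1 c ≤ k).card
      = ∑ j ∈ univ.filter (fun j => j ≤ k), bcnt T j := by
    have := card_fiberwise_setsum (T 1) (univ.filter (fun j => j ≤ k)) (fun _ => True)
    simp only [and_true, mem_filter, mem_univ, true_and] at this
    exact this
  have e2 : (univ.filter fun c : Fin N => T 0 c < k).card
      = ∑ j ∈ univ.filter (fun j => j < k), acnt T j := by
    have := card_fiberwise_setsum (T 0) (univ.filter (fun j => j < k)) (fun _ => True)
    simp only [and_true, mem_filter, mem_univ, true_and] at this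
    exact this
  rw [← e1, ← e2]
  apply Finset.card_le_card
  intro c hc
  simp only [mem_filter, mem_univ, true_and] at hc ⊢
  exact lt_of_lt_of_le (hT2 c) hc

end TabForward
end Tab


section Tab2
variable {p N : ℕ} {r : Fin p → ℕ} {f : Fin (2 * N) → Fin p}
variable (hN : 2 * N = ∑ i, r i)
  (hf : ∀ (x : Fin (2 * N)) (k : Fin p), f x = k ↔
      (∑ i ∈ Finset.univ.filter (fun i => i < k), r i) ≤ (x : ℕ) ∧
        (x : ℕ) < ∑ i ∈ Finset.univ.filter (fun i => i ≤ k), r i)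
variable {T : Fin 2 → Fin N → Fin p}
  (hT1 : ∀ i : Fin 2, Monotone (T i)) (hT2 : ∀ c, T 0 c < T 1 c)
  (hT3 : ∀ k, (univ.filter (fun rc : Fin 2 × Fin N => T rc.1 rc.2 = k)).card = r k)

include hN hf hT3 in
lemma cls_block (j : Fin p) :
    (univ.filter fun y => f y = j ∧ toWordT r f T y = false).card = bcnt T j := by
  have hb : bcnt T j ≤ r j := by have := weight_split r hT3 j; omega
  have hset : (univ.filter fun y => f y = j ∧ toWordT r f T y = false)
      = univ.filter fun y : Fin (2*N) =>
          cps r j ≤ (y:ℕ) ∧ (y:ℕ) < cps r j + bcnt T j := by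
    ext y
    simp only [mem_filter, mem_univ, true_and, toWordT, decide_eq_false_iff_not, not_le]
    constructor
    · rintro ⟨h1, h2⟩
      rw [h1] at h2
      have h3 := f_lower r f hf y
      rw [h1] at h3
      exact ⟨h3, h2⟩
    · rintro ⟨h1, h2⟩
      have hfy : f y = j := (hfx r f hf y j).mpr ⟨h1, by omega⟩
      exact ⟨hfy, by rw [hfy]; exact h2⟩
  rw [hset, card_filter_ico _ _ (by have := cps_add_le r hN j; omega)]
  omega

include hN hf hT3 in
lemma opn_block (j : Fin p) :
    (univ.filter fun y => f y = j ∧ toWordT r f T y = true).card = acnt T j := by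
  have hw := weight_split r hT3 j
  have hset : (univ.filter fun y => f y = j ∧ toWordT r f T y = true)
      = univ.filter fun y : Fin (2*N) =>
          cps r j + bcnt T j ≤ (y:ℕ) ∧ (y:ℕ) < cps r j + r j := by
    ext y
    simp only [mem_filter, mem_univ, true_and, toWordT, decide_eq_true_eq]
    constructor
    · rintro ⟨h1, h2⟩
      rw [h1] at h2
      have h3 := f_upper r f hf y
      rw [h1] at h3
      exact ⟨h2, h3⟩
    · rintro ⟨h1, h2⟩
      have hfy : f y = j := (hfx r f hf y j).mpr ⟨by omega, h2⟩
      exact ⟨hfy, by rw [hfy]; exact h1⟩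
  rw [hset, card_filter_ico _ _ (cps_add_le r hN j)]
  omega

include hN hf hT3 in
lemma toWordT_total :
    (univ.filter fun x => toWordT r f T x = true).card = N := by
  have h1 := card_fiberwise_setsum f (univ : Finset (Fin p))
    (fun y => toWordT r f T y = true)
  simp only [mem_univ, true_and] at h1
  rw [h1]
  have h2 : ∀ j ∈ (univ : Finset (Fin p)),
      (univ.filter fun y => f y = j ∧ toWordT r f T y = true).card = acnt T j :=
    fun j _ => opn_block hN hf hT3 j
  rw [Finset.sum_congr rfl h2]
  exact row_sum 0

include hN hf hT1 hT2 hT3 in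
lemma toWordT_bal (x : Fin (2 * N)) (hx : toWordT r f T x = false) :
    (univ.filter fun y : Fin (2*N) => y < x ∧ toWordT r f T y = false).card
      < (univ.filter fun y : Fin (2*N) => y < x ∧ toWordT r f T y = true).card := by
  set w := toWordT r f T with hwdef
  set k := f x with hk
  have hxlow : cps r k ≤ (x:ℕ) := f_lower r f hf x
  have hxup : (x:ℕ) < cps r k + bcnt T k := by
    have := hx
    rw [hwdef, toWordT, decide_eq_false_iff_not, not_le, ← hk] at this
    exact this
  -- upper bound for closers before x
  have hcls : (univ.filter fun y : Fin (2*N) => y < x ∧ w y = false).card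
      ≤ (∑ j ∈ univ.filter (fun j => j < k), bcnt T j) + ((x:ℕ) - cps r k) := by
    have hsub : (univ.filter fun y : Fin (2*N) => y < x ∧ w y = false)
        ⊆ (univ.filter fun y : Fin (2*N) => f y < k ∧ w y = false)
          ∪ (univ.filter fun y : Fin (2*N) => cps r k ≤ (y:ℕ) ∧ (y:ℕ) < (x:ℕ)) := by
      intro y hy
      simp only [mem_filter, mem_univ, true_and] at hy
      rw [Finset.mem_union]
      have hfle : f y ≤ k := by rw [hk]; exact f_mono r f hf (le_of_lt hy.1)
      rcases lt_or_eq_of_le hfle with h | h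
      · left; simp only [mem_filter, mem_univ, true_and]; exact ⟨h, hy.2⟩
      · right; simp only [mem_filter, mem_univ, true_and]
        refine ⟨?_, hy.1⟩
        have := f_lower r f hf y
        rw [h] at this
        exact this
    have hA : (univ.filter fun y : Fin (2*N) => f y < k ∧ w y = false).card
        = ∑ j ∈ univ.filter (fun j => j < k), bcnt T j := by
      have h1 := card_fiberwise_setsum f (univ.filter (fun j => j < k))
        (fun y => w y = false)
      simp only [mem_filter, mem_univ, true_and] at h1
      rw [h1]
      exact Finset.sum_congr rfl (fun j _ => cls_block hN hf hT3 j)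
    have hB : (univ.filter fun y : Fin (2*N) => cps r k ≤ (y:ℕ) ∧ (y:ℕ) < (x:ℕ)).card
        = (x:ℕ) - cps r k :=
      card_filter_ico _ _ (le_of_lt x.isLt)
    calc (univ.filter fun y : Fin (2*N) => y < x ∧ w y = false).card
        ≤ _ := Finset.card_le_card hsub
      _ ≤ _ + _ := Finset.card_union_le _ _
      _ = _ := by rw [hA, hB]
  -- lower bound for openers before x
  have hopn : (∑ j ∈ univ.filter (fun j => j < k), acnt T j)
      ≤ (univ.filter fun y : Fin (2*N) => y < x ∧ w y = true).card := by
    have hsub : (univ.filter fun y : Fin (2*N) => f y < k ∧ w y = true)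
        ⊆ (univ.filter fun y : Fin (2*N) => y < x ∧ w y = true) := by
      intro y hy
      simp only [mem_filter, mem_univ, true_and] at hy ⊢
      refine ⟨?_, hy.2⟩
      rw [Fin.lt_def]
      have h1 := f_upper r f hf y
      have h2 := cps_le_cps r hy.1
      omega
    have hC : (univ.filter fun y : Fin (2*N) => f y < k ∧ w y = true).card
        = ∑ j ∈ univ.filter (fun j => j < k), acnt T j := by
      have h1 := card_fiberwise_setsum f (univ.filter (fun j => j < k))
        (fun y => w y = true)
      simp only [mem_filter, mem_univ, true_and] at h1
      rw [h1]
      exact Finset.sum_congr rfl (fun j _ => opn_block hN hf hT3 j)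
    rw [← hC]
    exact Finset.card_le_card hsub
  have hkey := key_ineq hT2 k
  rw [sum_filter_le_split] at hkey
  omega

include hN hf hT1 hT2 hT3 in
lemma toWordT_isword : IsWord f (toWordT r f T) := by
  refine ⟨toWordT_bal hN hf hT1 hT2 hT3, toWordT_total hN hf hT3, ?_⟩
  intro s t hst hfe hs
  rw [toWordT, decide_eq_true_eq] at hs ⊢
  rw [← hfe]
  exact le_trans hs hst

end Tab2


section OEmb
variable {M n : ℕ}

lemma oemb_strictMono (s : Finset (Fin M)) (h : s.card = n) :
    StrictMono (s.orderEmbOfFin h) := (s.orderEmbOfFin h).strictMono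

lemma oemb_cnt (s : Finset (Fin M)) (h : s.card = n) (c : Fin n) :
    (univ.filter fun y => y < s.orderEmbOfFin h c ∧ y ∈ s).card = (c : ℕ) := by
  have himg : (univ.filter fun y => y < s.orderEmbOfFin h c ∧ y ∈ s)
      = (univ.filter fun c' : Fin n => (c' : ℕ) < (c : ℕ)).image (s.orderEmbOfFin h) := by
    ext y
    simp only [mem_filter, mem_univ, true_and, Finset.mem_image]
    constructor
    · rintro ⟨h1, h2⟩
      have : y ∈ Set.range (s.orderEmbOfFin h) := by
        rw [Finset.range_orderEmbOfFin]; exact h2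
      obtain ⟨c', hc'⟩ := this
      refine ⟨c', ?_, hc'⟩
      have : s.orderEmbOfFin h c' < s.orderEmbOfFin h c := by rw [hc']; exact h1
      exact (oemb_strictMono s h).lt_iff_lt.mp this
    · rintro ⟨c', hc', rfl⟩
      refine ⟨(oemb_strictMono s h) (show c' < c from hc'), Finset.orderEmbOfFin_mem s h c'⟩
  rw [himg, Finset.card_image_of_injective _ (s.orderEmbOfFin h).injective,
    card_filter_lt_fin _ (le_of_lt c.isLt)]

lemma oemb_lt (s : Finset (Fin M)) (h : s.card = n) (c : Fin n) (t : Fin M)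
    (hc : (c : ℕ) < (univ.filter fun y => y < t ∧ y ∈ s).card) :
    s.orderEmbOfFin h c < t := by
  by_contra hle
  push_neg at hle
  have hsub : (univ.filter fun y => y < t ∧ y ∈ s)
      ⊆ (univ.filter fun c' : Fin n => (c' : ℕ) < (c : ℕ)).image (s.orderEmbOfFin h) := by
    intro y hy
    simp only [mem_filter, mem_univ, true_and] at hy
    have : y ∈ Set.range (s.orderEmbOfFin h) := by
      rw [Finset.range_orderEmbOfFin]; exact hy.2
    obtain ⟨c', hc'⟩ := this
    rw [Finset.mem_image]
    refine ⟨c', ?_, hc'⟩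
    simp only [mem_filter, mem_univ, true_and]
    have hlt : s.orderEmbOfFin h c' < s.orderEmbOfFin h c :=
      lt_of_lt_of_le (hc' ▸ hy.1) hle
    exact (oemb_strictMono s h).lt_iff_lt.mp hlt
  have := Finset.card_le_card hsub
  rw [Finset.card_image_of_injective _ (s.orderEmbOfFin h).injective,
    card_filter_lt_fin _ (le_of_lt c.isLt)] at this
  omega

end OEmb

section Tab3
variable {p N : ℕ} {r : Fin p → ℕ} {f : Fin (2 * N) → Fin p}

/-- the `c`-th position with word value `b` -/
noncomputable def sig (w : Fin (2 * N) → Bool) (b : Bool) : Fin N → Fin (2 * N) :=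
  if h : (univ.filter fun x => w x = b).card = N
  then (univ.filter fun x => w x = b).orderEmbOfFin h
  else fun c => ⟨(c : ℕ), by omega⟩

noncomputable def toTab (f : Fin (2 * N) → Fin p) (w : Fin (2 * N) → Bool) :
    Fin 2 → Fin N → Fin p :=
  fun i c => f (sig w (decide (i = 0)) c)

variable {w : Fin (2 * N) → Bool} (hw : IsWord f w)

include hw in
lemma word_card (b : Bool) : (univ.filter fun x => w x = b).card = N := by
  cases b
  · have h3 := Finset.card_filter_add_card_filter_not
      (s := (univ : Finset (Fin (2*N)))) (p := fun x => w x = true)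
    simp only [Bool.not_eq_true, Finset.card_univ, Fintype.card_fin] at h3
    have := hw.2.1
    omega
  · exact hw.2.1

include hw in
lemma sig_def (b : Bool) :
    sig w b = (univ.filter fun x => w x = b).orderEmbOfFin (word_card hw b) := by
  rw [sig, dif_pos]

include hw in
lemma sig_mem (b : Bool) (c : Fin N) : w (sig w b c) = b := by
  rw [sig_def hw b]
  have := Finset.orderEmbOfFin_mem (univ.filter fun x => w x = b) (word_card hw b) c
  rw [Finset.mem_filter] at this
  exact this.2

include hw in
lemma sig_strictMono (b : Bool) : StrictMono (sig w b) := by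
  rw [sig_def hw b]
  exact oemb_strictMono _ _

include hw in
lemma sig_cnt (b : Bool) (c : Fin N) :
    (univ.filter fun y => y < sig w b c ∧ w y = b).card = (c : ℕ) := by
  have h1 := oemb_cnt (univ.filter fun x => w x = b) (word_card hw b) c
  rw [← sig_def hw b] at h1
  rw [← h1]
  congr 1
  ext y
  simp only [mem_filter, mem_univ, true_and]

include hw in
lemma sig_lt (b : Bool) (c : Fin N) (t : Fin (2 * N))
    (hc : (c : ℕ) < (univ.filter fun y => y < t ∧ w y = b).card) :
    sig w b c < t := by
  rw [sig_def hw b]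
  apply oemb_lt
  convert hc using 2
  ext y
  simp only [mem_filter, mem_univ, true_and]

include hw in
lemma sig_surj (b : Bool) (x : Fin (2 * N)) (hx : w x = b) :
    ∃ c, sig w b c = x := by
  have : x ∈ Set.range ((univ.filter fun y => w y = b).orderEmbOfFin (word_card hw b)) := by
    rw [Finset.range_orderEmbOfFin]
    simp [hx]
  obtain ⟨c, hc⟩ := this
  exact ⟨c, by rw [sig_def hw b]; exact hc⟩

end Tab3


section Tab4
variable {p N : ℕ} {r : Fin p → ℕ} {f : Fin (2 * N) → Fin p}
variable (hN : 2 * N = ∑ i, r i)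
  (hf : ∀ (x : Fin (2 * N)) (k : Fin p), f x = k ↔
      (∑ i ∈ Finset.univ.filter (fun i => i < k), r i) ≤ (x : ℕ) ∧
        (x : ℕ) < ∑ i ∈ Finset.univ.filter (fun i => i ≤ k), r i)
variable {w : Fin (2 * N) → Bool} (hw : IsWord f w)

lemma toTab_zero : toTab f w 0 = fun c => f (sig w true c) := by
  funext c; simp [toTab]

lemma toTab_one : toTab f w 1 = fun c => f (sig w false c) := by
  funext c; simp [toTab]

include hf hw in
lemma toTab_mono : ∀ i : Fin 2, Monotone (toTab f w i) := by
  intro i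
  fin_cases i
  · show Monotone (toTab f w 0)
    rw [toTab_zero]
    exact (f_mono r f hf).comp (sig_strictMono hw true).monotone
  · show Monotone (toTab f w 1)
    rw [toTab_one]
    exact (f_mono r f hf).comp (sig_strictMono hw false).monotone

include hf hw in
lemma toTab_strict : ∀ c : Fin N, toTab f w 0 c < toTab f w 1 c := by
  intro c
  rw [toTab_zero, toTab_one]
  set y := sig w false c with hy
  have hbalc := hw.1 y (sig_mem hw false c)
  have hcls : (univ.filter fun y' => y' < y ∧ w y' = false).card = (c : ℕ) :=
    sig_cnt hw false c
  have hlt : sig w true c < y := sig_lt hw true c y (by omega)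
  have hle : f (sig w true c) ≤ f y := f_mono r f hf (le_of_lt hlt)
  rcases lt_or_eq_of_le hle with h | h
  · exact h
  · exfalso
    have := hw.2.2 (sig w true c) y (le_of_lt hlt) h (sig_mem hw true c)
    rw [sig_mem hw false c] at this
    exact Bool.false_ne_true this

include hw in
lemma row_fiber (b : Bool) (k : Fin p) :
    (univ.filter fun c => f (sig w b c) = k).card
      = (univ.filter fun y => f y = k ∧ w y = b).card := by
  apply Finset.card_bij (fun c _ => sig w b c)
  · intro c hc
    simp only [mem_filter, mem_univ, true_and] at hc ⊢
    exact ⟨hc, sig_mem hw b c⟩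
  · intro a _ b' _ h
    exact (sig_strictMono hw b).injective h
  · intro y hy
    simp only [mem_filter, mem_univ, true_and] at hy
    obtain ⟨c, hc⟩ := sig_surj hw b y hy.2
    exact ⟨c, by simp only [mem_filter, mem_univ, true_and]; rw [hc]; exact hy.1, hc⟩

include hN hf in
lemma block_partition (k : Fin p) :
    (univ.filter fun y => f y = k ∧ w y = true).card
      + (univ.filter fun y => f y = k ∧ w y = false).card = r k := by
  have h3 := Finset.card_filter_add_card_filter_not
    (s := univ.filter fun y : Fin (2*N) => f y = k) (p := fun y => w y = true)
  rw [Finset.filter_filter, Finset.filter_filter] at h3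
  simp only [Bool.not_eq_true] at h3
  rw [block_card r f hN hf k] at h3
  exact h3

include hN hf hw in
lemma toTab_weight :
    ∀ k : Fin p, (univ.filter fun rc : Fin 2 × Fin N => toTab f w rc.1 rc.2 = k).card = r k := by
  intro k
  rw [prod_split]
  have ha : acnt (toTab f w) k = (univ.filter fun y => f y = k ∧ w y = true).card := by
    rw [acnt]
    simp only [toTab_zero]
    rw [row_fiber hw true k]
  have hb : bcnt (toTab f w) k = (univ.filter fun y => f y = k ∧ w y = false).card := by
    rw [bcnt]
    simp only [toTab_one]
    rw [row_fiber hw false k]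
  rw [ha, hb]
  exact block_partition hN hf k

include hN hf hw in
lemma word_false_iff (x : Fin (2 * N)) :
    w x = false ↔ (x : ℕ) < cps r (f x)
      + (univ.filter fun y => f y = f x ∧ w y = false).card := by
  set k := f x with hk
  set B := (univ.filter fun y => f y = k ∧ w y = false).card with hB
  have hxlow : cps r k ≤ (x:ℕ) := f_lower r f hf x
  have hxup : (x:ℕ) < cps r k + r k := f_upper r f hf x
  constructor
  · intro hx
    have hsub : (univ.filter fun y : Fin (2*N) => cps r k ≤ (y:ℕ) ∧ (y:ℕ) < (x:ℕ) + 1)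
        ⊆ univ.filter fun y => f y = k ∧ w y = false := by
      intro y hy
      simp only [mem_filter, mem_univ, true_and] at hy ⊢
      have hfy : f y = k := (hfx r f hf y k).mpr ⟨hy.1, by omega⟩
      refine ⟨hfy, ?_⟩
      by_contra hc
      have hc' : w y = true := by simpa using hc
      have := hw.2.2 y x (by rw [Fin.le_def]; omega) (by rw [hfy]) hc'
      rw [hx] at this
      exact Bool.false_ne_true this
    have hcard := Finset.card_le_card hsub
    rw [card_filter_ico _ _ (by omega : (x:ℕ) + 1 ≤ 2 * N)] at hcard
    omega
  · intro hlt
    by_contra hc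
    have hc' : w x = true := by simpa using hc
    have hsub : (univ.filter fun y : Fin (2*N) => (x:ℕ) ≤ (y:ℕ) ∧ (y:ℕ) < cps r k + r k)
        ⊆ univ.filter fun y => f y = k ∧ w y = true := by
      intro y hy
      simp only [mem_filter, mem_univ, true_and] at hy ⊢
      have hfy : f y = k := (hfx r f hf y k).mpr ⟨by omega, hy.2⟩
      exact ⟨hfy, hw.2.2 x y (by rw [Fin.le_def]; omega) (by rw [hfy]) hc'⟩
    have hcard := Finset.card_le_card hsub
    rw [card_filter_ico _ _ (cps_add_le r hN k)] at hcard
    have hpart := block_partition hN hf (w := w) k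
    omega

include hN hf hw in
lemma toTab_toWordT : toWordT r f (toTab f w) = w := by
  funext x
  have hb : bcnt (toTab f w) (f x)
      = (univ.filter fun y => f y = f x ∧ w y = false).card := by
    rw [bcnt]
    simp only [toTab_one]
    rw [row_fiber hw false (f x)]
  rw [toWordT, hb]
  cases hx : w x
  · have := (word_false_iff hN hf hw x).mp hx
    simp only [decide_eq_false_iff_not, not_le]
    exact this
  · have := (word_false_iff hN hf hw x).not.mp (by simp [hx])
    push_neg at this
    simp only [decide_eq_true_eq]
    exact this

end Tab4

section Tab5
variable {p N : ℕ} {r : Fin p → ℕ} {f : Fin (2 * N) → Fin p}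
variable (hN : 2 * N = ∑ i, r i)
  (hf : ∀ (x : Fin (2 * N)) (k : Fin p), f x = k ↔
      (∑ i ∈ Finset.univ.filter (fun i => i < k), r i) ≤ (x : ℕ) ∧
        (x : ℕ) < ∑ i ∈ Finset.univ.filter (fun i => i ≤ k), r i)
variable {T : Fin 2 → Fin N → Fin p}
  (hT1 : ∀ i : Fin 2, Monotone (T i)) (hT2 : ∀ c, T 0 c < T 1 c)
  (hT3 : ∀ k, (univ.filter (fun rc : Fin 2 × Fin N => T rc.1 rc.2 = k)).card = r k)

include hN hf hT1 hT2 hT3 in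
lemma toWordT_toTab : toTab f (toWordT r f T) = T := by
  have hw' : IsWord f (toWordT r f T) := toWordT_isword hN hf hT1 hT2 hT3
  funext i
  fin_cases i
  · apply monotone_eq_of_fiber_card _ _ (toTab_mono hf hw' 0) (hT1 0)
    intro k
    show (univ.filter fun c => toTab f (toWordT r f T) 0 c = k).card
      = (univ.filter fun c => T 0 c = k).card
    simp only [toTab_zero]
    rw [row_fiber hw' true k, opn_block hN hf hT3 k]
    rfl
  · apply monotone_eq_of_fiber_card _ _ (toTab_mono hf hw' 1) (hT1 1)
    intro k
    show (univ.filter fun c => toTab f (toWordT r f T) 1 c = k).card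
      = (univ.filter fun c => T 1 c = k).card
    simp only [toTab_one]
    rw [row_fiber hw' false k, cls_block hN hf hT3 k]
    rfl

end Tab5

end NC2


/-- For an integer vector `r = (r₁,…,r_p)` of positive integers with `|r|` even,
the number of semi-standard Young tableaux of rectangular shape
`(|r|/2, |r|/2)` (2 rows, `|r|/2` columns) and weight `r` (rows weakly
increasing, columns strictly increasing, `rᵢ` entries equal to `i`) equals
`#NC₂(r)`, the number of non-crossing pairings of `{1,…,|r|}` pairing no two
elements within the same block of `1̂_r`.  Here `|r| = 2 * N`, tableaux are
functions `Fin 2 → Fin N → Fin p`, pairings are fixed-point-free involutions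
`m` of `Fin (2*N)`, and `f` is the block function of `1̂_r`. -/
theorem ssyt_card_eq_nc2_card (p N : ℕ) (r : Fin p → ℕ) (hr : ∀ i, 1 ≤ r i)
    (hN : 2 * N = ∑ i, r i) (f : Fin (2 * N) → Fin p)
    (hf : ∀ (x : Fin (2 * N)) (k : Fin p), f x = k ↔
      (∑ i ∈ Finset.univ.filter (fun i => i < k), r i) ≤ (x : ℕ) ∧
        (x : ℕ) < ∑ i ∈ Finset.univ.filter (fun i => i ≤ k), r i) :
    Nat.card {T : Fin 2 → Fin N → Fin p //
        (∀ i : Fin 2, Monotone (T i)) ∧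
        (∀ c : Fin N, T 0 c < T 1 c) ∧
        (∀ k : Fin p,
          (Finset.univ.filter (fun rc : Fin 2 × Fin N => T rc.1 rc.2 = k)).card = r k)}
      = Nat.card {m : Fin (2 * N) → Fin (2 * N) //
          (∀ x, m (m x) = x) ∧ (∀ x, m x ≠ x) ∧
          (¬ ∃ a b : Fin (2 * N), a < b ∧ b < m a ∧ m a < m b) ∧
          (∀ x, f (m x) ≠ f x)} := by
  have hfm : Monotone f := NC2.f_mono r f hf
  apply Nat.card_congr
  have hwT : ∀ T : {T : Fin 2 → Fin N → Fin p //
      (∀ i : Fin 2, Monotone (T i)) ∧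
      (∀ c : Fin N, T 0 c < T 1 c) ∧
      (∀ k : Fin p,
        (Finset.univ.filter (fun rc : Fin 2 × Fin N => T rc.1 rc.2 = k)).card = r k)},
      NC2.IsWord f (NC2.toWordT r f T.1) := fun T =>
    NC2.toWordT_isword hN hf T.2.1 T.2.2.1 T.2.2.2
  have hwM : ∀ m : {m : Fin (2 * N) → Fin (2 * N) //
      (∀ x, m (m x) = x) ∧ (∀ x, m x ≠ x) ∧
      (¬ ∃ a b : Fin (2 * N), a < b ∧ b < m a ∧ m a < m b) ∧
      (∀ x, f (m x) ≠ f x)},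
      NC2.IsWord f (NC2.toWord m.1) := fun m =>
    NC2.match_isword m.2.1 m.2.2.1 m.2.2.2.1 m.2.2.2.2 hfm
  refine
  { toFun := fun T => ⟨NC2.toMatch (NC2.toWordT r f T.1),
      NC2.tm_invol (hwT T), NC2.tm_fpf (hwT T), NC2.tm_noncross (hwT T),
      NC2.tm_fcond (hwT T)⟩
    invFun := fun m => ⟨NC2.toTab f (NC2.toWord m.1),
      NC2.toTab_mono hf (hwM m), NC2.toTab_strict hf (hwM m),
      NC2.toTab_weight hN hf (hwM m)⟩
    left_inv := ?_
    right_inv := ?_ }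
  · intro T
    apply Subtype.ext
    show NC2.toTab f (NC2.toWord (NC2.toMatch (NC2.toWordT r f T.1))) = T.1
    rw [NC2.tm_toWord (hwT T)]
    exact NC2.toWordT_toTab hN hf T.2.1 T.2.2.1 T.2.2.2
  · intro m
    apply Subtype.ext
    show NC2.toMatch (NC2.toWordT r f (NC2.toTab f (NC2.toWord m.1))) = m.1
    rw [NC2.toTab_toWordT hN hf (hwM m)]
    exact NC2.tm_of_toWord m.2.1 m.2.2.1 m.2.2.2.1 m.2.2.2.2 hfm
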